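/- arXiv:2006.00453 — 2 statements merged into one kernel-verified Lean document; each statement's English description precedes it below -/
import Mathlib

section
/- Let f : W → ℝ be a global function (every local minimizer is a global minimizer) on an open set W ⊆ ℝⁿ that maps onto itself under F, and let g : W → ℝ be twice continuously differentiable with ‖∇²g(w)‖ ≤ M for all w. For any 0 < η < 1/M, the MAML objective h(w) = f(w − η∇g(w)) is a global function, provided range(w ↦ w − η∇g(w)) = W. -/
open scoped RealInnerProductSpace

/-- `ℓ` is a global function on `Z`: every local minimizer over `Z` is a global
minimizer over `Z`. -/
def GlobalOn {E : Type*} [NormedAddCommGroup E] (ℓ : E → ℝ) (Z : Set E) : Prop :=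
  ∀ z₀ ∈ Z, IsLocalMinOn ℓ Z z₀ → ∀ z ∈ Z, ℓ z₀ ≤ ℓ z

/-- If `f` is a global function on open `W ⊆ ℝⁿ`, `g` is twice
continuously differentiable with Hessian bounded by `M`, `0 < η < 1/M`, and the
adaptation map `w ↦ w − η ∇g w` maps `W` onto `W`, then the MAML objective
`h w = f (w − η ∇g w)` is a global function on `W`. -/
theorem stmt_5 {n : ℕ} (W : Set (EuclideanSpace ℝ (Fin n))) (hW : IsOpen W)
    (f g : EuclideanSpace ℝ (Fin n) → ℝ)
    (hf : ContinuousOn f W) (hfglob : GlobalOn f W)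
    (hg : ContDiffOn ℝ 2 g W)
    (H : EuclideanSpace ℝ (Fin n) →
      (EuclideanSpace ℝ (Fin n) →L[ℝ] EuclideanSpace ℝ (Fin n)))
    (hHess : ∀ w ∈ W, HasFDerivAt (gradient g) (H w) w)
    (hHsym : ∀ w ∈ W, ∀ u v, ⟪H w u, v⟫ = ⟪u, H w v⟫)
    (M : ℝ) (hM : 0 < M) (hbound : ∀ w ∈ W, ‖H w‖ ≤ M)
    (η : ℝ) (hη₀ : 0 < η) (hη : η < 1 / M)
    (hrange : (fun w => w - η • gradient g w) '' W = W) :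
    GlobalOn (fun w => f (w - η • gradient g w)) W := by
  
  set F : EuclideanSpace ℝ (Fin n) → EuclideanSpace ℝ (Fin n) :=
    fun w => w - η • gradient g w with hF
  -- gradient g is C¹ on W
  have hgrad : ContDiffOn ℝ 1 (gradient g) W := by
    have h1 : ContDiffOn ℝ 1 (fderiv ℝ g) W :=
      ContDiffOn.fderiv_of_isOpen (m := 1) hg hW (by norm_num)
    have : ContDiffOn ℝ 1
        (fun x => (InnerProductSpace.toDual ℝ (EuclideanSpace ℝ (Fin n))).symm (fderiv ℝ g x)) W :=
      ((InnerProductSpace.toDual ℝ (EuclideanSpace ℝ (Fin n))).symm.contDiff.comp_contDiffOn h1)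
    exact this
  have hFc : ContDiffOn ℝ 1 F W :=
    contDiffOn_id.sub (hgrad.const_smul η)
  intro w₀ hw₀ hmin
  -- the derivative of F at w₀
  set A : (EuclideanSpace ℝ (Fin n)) →L[ℝ] (EuclideanSpace ℝ (Fin n)) := ContinuousLinearMap.id ℝ (EuclideanSpace ℝ (Fin n)) - η • H w₀ with hA
  have hFA : HasFDerivAt F A w₀ :=
    (hasFDerivAt_id w₀).sub ((hHess w₀ hw₀).const_smul η)
  -- A = 1 - t with ‖t‖ < 1, hence a unit
  have ht : ‖η • H w₀‖ < 1 := by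
    rw [norm_smul η (H w₀), Real.norm_eq_abs, abs_of_pos hη₀]
    calc η * ‖H w₀‖ ≤ η * M := by
          exact mul_le_mul_of_nonneg_left (hbound w₀ hw₀) hη₀.le
      _ < 1 := by
          rw [lt_div_iff₀ hM] at hη; linarith
  set u : ((EuclideanSpace ℝ (Fin n)) →L[ℝ] (EuclideanSpace ℝ (Fin n)))ˣ := Units.oneSub (η • H w₀) ht with hu
  have huA : (u : (EuclideanSpace ℝ (Fin n)) →L[ℝ] (EuclideanSpace ℝ (Fin n))) = A := by
    simp [hu, hA, Units.val_oneSub, ContinuousLinearMap.one_def]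
  set e : (EuclideanSpace ℝ (Fin n)) ≃L[ℝ] (EuclideanSpace ℝ (Fin n)) := ContinuousLinearEquiv.ofUnit u with he
  have heA : (e : (EuclideanSpace ℝ (Fin n)) →L[ℝ] (EuclideanSpace ℝ (Fin n))) = A := huA
  -- strict derivative
  have hstrict : HasStrictFDerivAt F (e : (EuclideanSpace ℝ (Fin n)) →L[ℝ] (EuclideanSpace ℝ (Fin n))) w₀ := by
    rw [heA, ← hFA.fderiv]
    exact (hFc.contDiffAt (hW.mem_nhds hw₀)).hasStrictFDerivAt one_ne_zero
  have hmap : Filter.map F (nhds w₀) = nhds (F w₀) :=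
    hstrict.map_nhds_eq_of_equiv
  -- F w₀ ∈ W
  have hFw₀ : F w₀ ∈ W := by
    rw [← hrange]; exact Set.mem_image_of_mem F hw₀
  -- F w₀ is a local min of f on W
  have hfmin : IsLocalMinOn f W (F w₀) := by
    have h1 : ∀ᶠ z in nhds (F w₀), f (F w₀) ≤ f z := by
      rw [← hmap, Filter.eventually_map]
      have h2 : ∀ᶠ w in nhds w₀, f (F w₀) ≤ f (F w) := by
        have := hmin
        rw [IsLocalMinOn, IsMinFilter, nhdsWithin_eq_nhds.2 (hW.mem_nhds hw₀)]
          at this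
        exact this
      exact h2
    exact h1.filter_mono nhdsWithin_le_nhds
  have hglob := hfglob (F w₀) hFw₀ hfmin
  intro w hw
  have : F w ∈ W := by rw [← hrange]; exact Set.mem_image_of_mem F hw
  exact hglob (F w) this
end

section
/- If f : W → ℝ is ε-global, g : W → ℝ is twice continuously differentiable, and w⋆ ∈ W is a local minimizer of h(w) = f(w − η∇g(w)) with η < 1/‖∇²g(w⋆)‖, then h(w⋆) − inf_{w∈W} h(w) ≤ ε. -/
/-- `ℓ` is ε-global on `Z`: every local minimizer of `ℓ` over `Z` is within `ε`
of the infimum of `ℓ` over `Z`. -/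
def EpsGlobalOn {E : Type*} [NormedAddCommGroup E] (ℓ : E → ℝ) (Z : Set E) (ε : ℝ) : Prop :=
  ∀ z₀ ∈ Z, IsLocalMinOn ℓ Z z₀ → ∀ z ∈ Z, ℓ z₀ ≤ ℓ z + ε

open Topology Filter

/-- If `f` is ε-global, `g` is twice continuously differentiable (with
continuous Hessian `H`), and `w⋆` is a local minimizer of `h w = f (w − η ∇g w)`
with `η < 1/‖H w⋆‖`, then `h w⋆ − inf_W h ≤ ε`. -/
theorem stmt_6 {n : ℕ} (W : Set (EuclideanSpace ℝ (Fin n))) (hW : IsOpen W)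
    (f g : EuclideanSpace ℝ (Fin n) → ℝ) (ε : ℝ) (hε : 0 < ε)
    (hf : ContinuousOn f W) (hfglob : EpsGlobalOn f W ε)
    (hg : ContDiffOn ℝ 2 g W)
    (H : EuclideanSpace ℝ (Fin n) →
      (EuclideanSpace ℝ (Fin n) →L[ℝ] EuclideanSpace ℝ (Fin n)))
    (hHess : ∀ w ∈ W, HasFDerivAt (gradient g) (H w) w)
    (hHcont : ContinuousOn H W)
    (η : ℝ) (hη₀ : 0 < η)
    (hrange : (fun w => w - η • gradient g w) '' W = W)
    (wstar : EuclideanSpace ℝ (Fin n)) (hwstar : wstar ∈ W)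
    (hη : η < 1 / ‖H wstar‖)
    (hmin : IsLocalMinOn (fun w => f (w - η • gradient g w)) W wstar) :
    ∀ w ∈ W, f (wstar - η • gradient g wstar) ≤ f (w - η • gradient g w) + ε := by
  set T : EuclideanSpace ℝ (Fin n) → EuclideanSpace ℝ (Fin n) := fun w => w - η • gradient g w with hT
  -- norm bound
  have hHpos : 0 < ‖H wstar‖ := by
    rcases (norm_nonneg (H wstar)).lt_or_eq with h | h
    · exact h
    · exfalso; rw [← h] at hη; simp at hη; linarith
  have hlt : ‖η • H wstar‖ < 1 := by
    have h1 : ‖η • H wstar‖ = ‖η‖ * ‖H wstar‖ := norm_smul η (H wstar)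
    rw [h1, Real.norm_eq_abs, abs_of_pos hη₀]
    rw [lt_div_iff₀ hHpos] at hη
    linarith
  -- the derivative of T at wstar, as a continuous linear equiv
  let E := EuclideanSpace ℝ (Fin n)
  let u : (E →L[ℝ] E)ˣ := Units.oneSub (η • H wstar) hlt
  let e : E ≃L[ℝ] E := ContinuousLinearEquiv.unitsEquiv ℝ E u
  have hW' : W ∈ 𝓝 wstar := hW.mem_nhds hwstar
  have hsd : HasStrictFDerivAt T (e : E →L[ℝ] E)  wstar := by
    have : HasStrictFDerivAt T
        ((fun w => ContinuousLinearMap.id ℝ E - η • H w) wstar) wstar := by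
      apply hasStrictFDerivAt_of_hasFDerivAt_of_continuousAt
        (f' := fun w => ContinuousLinearMap.id ℝ E - η • H w)
      · filter_upwards [hW'] with w hw
        exact (hasFDerivAt_id w).sub ((hHess w hw).const_smul η)
      · exact ((hHcont.continuousAt hW').const_smul η).const_sub _
    exact this
  have hmap : Filter.map T (𝓝 wstar) = 𝓝 (T wstar) := hsd.map_nhds_eq_of_equiv
  -- T wstar ∈ W
  have hzW : T wstar ∈ W := by
    rw [← hrange]; exact ⟨wstar, hwstar, rfl⟩
  -- T wstar is a local min of f on W
  have hloc : IsLocalMinOn f W (T wstar) := by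
    have hmin' : ∀ᶠ w in 𝓝 wstar, f (T wstar) ≤ f (T w) := by
      have := hmin
      rw [IsLocalMinOn, IsMinFilter, nhdsWithin_eq_nhds.2 hW'] at this
      exact this
    have : ∀ᶠ z in 𝓝 (T wstar), f (T wstar) ≤ f z := by
      rw [← hmap, Filter.eventually_map]; exact hmin'
    exact (this.filter_mono nhdsWithin_le_nhds)
  intro w hw
  have hwz : T w ∈ W := by rw [← hrange]; exact ⟨w, hw, rfl⟩
  exact hfglob (T wstar) hzW hloc (T w) hwz
end
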